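/- Let E be a real inner product space, let G : E → ℝ be a Lipschitz function with Lipschitz constant C > 0, let α : I → E be a curve defined on an open interval I, and let s₀ ∈ I. Assume that α is differentiable at s₀, that the function ρ = G ∘ α is differentiable at s₀, and that there exists a nonzero vector η ∈ E with ⟪η, α′(s₀)⟫ = 0 and |G(α(s₀)) − G(α(s₀) + η)| = C‖η‖. Then ρ′(s₀) = 0. (This is Claim 3.1, the key step in the proof of Theorem 1.3, in the Euclidean/inner-product setting.) -/

import Mathlib

open scoped RealInnerProductSpace

/-- Claim 3.1 of the paper (key step in the proof of Theorem 1.3), in the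
Euclidean/inner-product setting: if `G` is `C`-Lipschitz, `α` is a curve on an open
interval differentiable at `s₀`, `ρ = G ∘ α` is differentiable at `s₀`, and there is a
nonzero `η` orthogonal to `α'(s₀)` with `|G(α s₀) - G(α s₀ + η)| = C‖η‖`, then
`ρ'(s₀) = 0`. -/
theorem stmt_4
    {E : Type*} [NormedAddCommGroup E] [InnerProductSpace ℝ E]
    (G : E → ℝ) (C : ℝ) (hC : 0 < C)
    (hLip : ∀ x y : E, |G x - G y| ≤ C * ‖x - y‖)
    (a b s₀ : ℝ) (hs₀ : s₀ ∈ Set.Ioo a b)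
    (α : ℝ → E) (α' : E) (hα : HasDerivAt α α' s₀)
    (ρ' : ℝ) (hρ : HasDerivAt (fun s => G (α s)) ρ' s₀)
    (η : E) (hη : η ≠ 0) (horth : ⟪η, α'⟫ = 0)
    (heq : |G (α s₀) - G (α s₀ + η)| = C * ‖η‖) :
    ρ' = 0 := by
  set u : ℝ → E := fun s => α s - (α s₀ + η) with hu
  have hu0 : u s₀ = -η := by simp [hu]
  have hune : u s₀ ≠ 0 := by simpa [hu0] using hη
  have hud : HasDerivAt u α' s₀ := hα.sub_const (α s₀ + η)
  have hn : DifferentiableAt ℝ (fun s => ‖u s‖) s₀ :=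
    hud.differentiableAt.norm ℝ hune
  set n' := deriv (fun s => ‖u s‖) s₀ with hn'
  have hnd : HasDerivAt (fun s => ‖u s‖) n' s₀ := hn.hasDerivAt
  have h1 : HasDerivAt (fun s => ‖u s‖ ^ 2) (2 * ‖u s₀‖ ^ 1 * n') s₀ := by
    simpa using hnd.fun_pow 2
  have h2 : HasDerivAt (fun s => ‖u s‖ ^ 2) (2 * ⟪u s₀, α'⟫) s₀ := hud.norm_sq
  have hz : (2 : ℝ) * ⟪u s₀, α'⟫ = 0 := by
    rw [hu0, inner_neg_left, horth]; ring
  have hn0 : n' = 0 := by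
    have := h1.unique h2
    rw [hz] at this
    have hnorm : ‖u s₀‖ ≠ 0 := norm_ne_zero_iff.mpr hune
    have : 2 * ‖u s₀‖ ^ 1 * n' = 0 := this
    rcases mul_eq_zero.mp this with h | h
    · exact absurd h (by positivity)
    · exact h
  have hgd : HasDerivAt (fun s => C * ‖u s‖) 0 s₀ := by
    simpa [hn0] using hnd.const_mul C
  have hbound : ∀ s, |G (α s) - G (α s₀ + η)| ≤ C * ‖u s‖ := fun s => hLip _ _
  have hnorm0 : ‖u s₀‖ = ‖η‖ := by rw [hu0, norm_neg]
  rcases abs_eq (by positivity : (0:ℝ) ≤ C * ‖η‖) |>.mp heq with h | h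
  · -- G(α s₀) - G(α s₀+η) = C‖η‖ : local max of φ
    have hφd : HasDerivAt (fun s => (G (α s) - G (α s₀ + η)) - C * ‖u s‖) (ρ' - 0) s₀ :=
      (hρ.sub_const _).sub hgd
    have hmax : IsLocalMax (fun s => (G (α s) - G (α s₀ + η)) - C * ‖u s‖) s₀ := by
      apply Filter.Eventually.of_forall
      intro s
      have := (hbound s)
      have h1 : G (α s) - G (α s₀ + η) ≤ C * ‖u s‖ := (abs_le.mp this).2
      simp only [hnorm0, h, sub_self]
      linarith
    have := hmax.hasDerivAt_eq_zero hφd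
    linarith
  · -- G(α s₀) - G(α s₀+η) = -(C‖η‖)
    have hφd : HasDerivAt (fun s => (G (α s₀ + η) - G (α s)) - C * ‖u s‖) (-ρ' - 0) s₀ :=
      ((hρ.fun_neg.add_const (G (α s₀ + η))).congr_deriv rfl |>.congr_of_eventuallyEq
        (Filter.Eventually.of_forall fun s => by ring)).sub hgd
    have hmax : IsLocalMax (fun s => (G (α s₀ + η) - G (α s)) - C * ‖u s‖) s₀ := by
      apply Filter.Eventually.of_forall
      intro s
      have := (hbound s)
      have h1 : -(C * ‖u s‖) ≤ G (α s) - G (α s₀ + η) := (abs_le.mp this).1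
      simp only [hnorm0, h]
      linarith
    have := hmax.hasDerivAt_eq_zero hφd
    linarith
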